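/- arXiv:2111.07591 — 2 statements merged into one kernel-verified Lean document; each statement's English description precedes it below -/
import Mathlib

section
/- Let n ≥ 2 and let C_D ⊆ ℝ^n be the cone generated by the vectors e_i − e_j and e_i + e_j for 1 ≤ i < j ≤ n. Call a vector Ξ ∈ ℝ^n D_n-dominant if Ξ_1 ≥ Ξ_2 ≥ ⋯ ≥ Ξ_{n−1} ≥ |Ξ_n|, and for such Ξ set Ξ⁺ := (Ξ_1, …, Ξ_{n−1}, |Ξ_n|). If Ξ and Ξ' are D_n-dominant and Ξ' − Ξ ∈ C_D, then Ξ'⁺ − Ξ⁺ ∈ C_D; moreover, if in addition Ξ⁺ = Ξ'⁺, then Ξ = Ξ'. -/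
/-- The first `k` entries' partial sum of a vector in `ℝ^n`. -/
def psum {n : ℕ} (v : Fin n → ℝ) (k : ℕ) : ℝ :=
  ∑ i : Fin n, if (i : ℕ) < k then v i else 0

/-- Membership in the cone `C_D ⊆ ℝ^n` generated by the vectors `e i - e j` and
`e i + e j` for `i < j`, i.e. being a nonnegative linear combination of them. -/
def inConeD (n : ℕ) (v : Fin n → ℝ) : Prop :=
  ∃ a b : Fin n → Fin n → ℝ,
    (∀ i j, 0 ≤ a i j) ∧ (∀ i j, 0 ≤ b i j) ∧
    v = ∑ i : Fin n, ∑ j : Fin n,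
      (if i < j then
        a i j • (Pi.single i (1 : ℝ) - Pi.single j 1) +
          b i j • (Pi.single i (1 : ℝ) + Pi.single j 1)
      else 0)

/-- `Ξ⁺ = (Ξ_1, …, Ξ_{n-1}, |Ξ_n|)`.  A vector `Ξ` is `D_n`-dominant
(`Ξ_1 ≥ ⋯ ≥ Ξ_{n-1} ≥ |Ξ_n|`) iff `plusMap n Ξ` is antitone. -/
def plusMap (n : ℕ) (Ξ : Fin n → ℝ) : Fin n → ℝ :=
  fun i => if (i : ℕ) = n - 1 then |Ξ i| else Ξ i

lemma psum_zero {n : ℕ} (v : Fin n → ℝ) : psum v 0 = 0 := by simp [psum]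

lemma psum_succ {n : ℕ} (v : Fin n → ℝ) (k : ℕ) (hk : k < n) :
    psum v (k + 1) = psum v k + v ⟨k, hk⟩ := by
  unfold psum
  have h : ∀ i : Fin n, (if (i : ℕ) < k + 1 then v i else 0)
      = (if (i : ℕ) < k then v i else 0) + (if i = ⟨k, hk⟩ then v i else 0) := by
    intro i
    rcases lt_trichotomy (i : ℕ) k with h1 | h1 | h1
    · have : i ≠ (⟨k, hk⟩ : Fin n) := by intro he; simp [he] at h1
      simp [h1, this]; omega
    · have : i = (⟨k, hk⟩ : Fin n) := by ext; exact h1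
      simp [this, h1]
    · have : i ≠ (⟨k, hk⟩ : Fin n) := by intro he; simp [he] at h1
      have h2 : ¬ (i : ℕ) < k + 1 := by omega
      have h3 : ¬ (i : ℕ) < k := by omega
      simp [h2, h3, this]
  rw [Finset.sum_congr rfl (fun i _ => h i), Finset.sum_add_distrib,
    Finset.sum_ite_eq' Finset.univ (⟨k, hk⟩ : Fin n) v]
  simp

lemma psum_add {n : ℕ} (u v : Fin n → ℝ) (k : ℕ) : psum (u + v) k = psum u k + psum v k := by
  unfold psum
  rw [← Finset.sum_add_distrib]
  refine Finset.sum_congr rfl fun i _ => ?_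
  by_cases h : (i : ℕ) < k <;> simp [h]

lemma psum_sub {n : ℕ} (u v : Fin n → ℝ) (k : ℕ) : psum (u - v) k = psum u k - psum v k := by
  unfold psum
  rw [← Finset.sum_sub_distrib]
  refine Finset.sum_congr rfl fun i _ => ?_
  by_cases h : (i : ℕ) < k <;> simp [h]

lemma psum_smul {n : ℕ} (c : ℝ) (v : Fin n → ℝ) (k : ℕ) : psum (c • v) k = c * psum v k := by
  unfold psum
  rw [Finset.mul_sum]
  refine Finset.sum_congr rfl fun i _ => ?_
  by_cases h : (i : ℕ) < k <;> simp [h]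

lemma psum_sum {n : ℕ} {ι : Type*} (s : Finset ι) (f : ι → Fin n → ℝ) (k : ℕ) :
    psum (∑ i ∈ s, f i) k = ∑ i ∈ s, psum (f i) k := by
  classical
  induction s using Finset.induction_on with
  | empty => simp [psum]
  | insert a s h ih => rw [Finset.sum_insert h, Finset.sum_insert h, psum_add, ih]

lemma psum_single {n : ℕ} (i : Fin n) (k : ℕ) :
    psum (Pi.single i (1 : ℝ)) k = if (i : ℕ) < k then 1 else 0 := by
  unfold psum
  rw [Finset.sum_eq_single i]
  · simp [Pi.single_apply]
  · intro j _ hj; simp [Pi.single_apply, hj]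
  · simp

lemma sum_ite_coe {N t : ℕ} (c : ℝ) :
    (∑ j : Fin N, if (j : ℕ) = t then c else 0) = if t < N then c else 0 := by
  by_cases h : t < N
  · rw [if_pos h, Finset.sum_eq_single (⟨t, h⟩ : Fin N)]
    · simp
    · intro j _ hj
      have : (j : ℕ) ≠ t := by intro he; exact hj (by ext; exact he)
      simp [this]
    · simp
  · rw [if_neg h]
    apply Finset.sum_eq_zero
    intro j _
    have : (j : ℕ) ≠ t := by have := j.isLt; omega
    simp [this]

lemma sum_ite_coe' {N t : ℕ} (ht : t < N) (c : Fin N → ℝ) :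
    (∑ j : Fin N, if (j : ℕ) = t then c j else 0) = c ⟨t, ht⟩ := by
  rw [Finset.sum_eq_single (⟨t, ht⟩ : Fin N)]
  · simp
  · intro j _ hj
    have : (j : ℕ) ≠ t := by intro he; exact hj (by ext; exact he)
    simp [this]
  · simp


lemma psum_nonneg_of_inConeD {n : ℕ} (v : Fin n → ℝ) (h : inConeD n v) (k : ℕ) :
    0 ≤ psum v k := by
  obtain ⟨a, b, ha, hb, hv⟩ := h
  rw [hv, psum_sum]
  refine Finset.sum_nonneg fun i _ => ?_
  rw [psum_sum]
  refine Finset.sum_nonneg fun j _ => ?_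
  by_cases hij : i < j
  · rw [if_pos hij, psum_add, psum_smul, psum_smul, psum_sub, psum_add,
      psum_single, psum_single]
    have hij' : (i : ℕ) < (j : ℕ) := hij
    have h1 := ha i j
    have h2 := hb i j
    split_ifs with hik hjk hjk <;> first | nlinarith | omega
  · rw [if_neg hij]; simp [psum]

lemma two_last_le_of_inConeD (m : ℕ) (v : Fin (m + 2) → ℝ) (h : inConeD (m + 2) v) :
    2 * v ⟨m + 1, by omega⟩ ≤ psum v (m + 2) := by
  obtain ⟨a, b, ha, hb, hv⟩ := h
  have key : 0 ≤ psum v (m + 2) - 2 * v ⟨m + 1, by omega⟩ := by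
    rw [hv, psum_sum]
    simp only [psum_sum, Finset.sum_apply]
    rw [Finset.mul_sum, ← Finset.sum_sub_distrib]
    refine Finset.sum_nonneg fun i _ => ?_
    rw [Finset.mul_sum, ← Finset.sum_sub_distrib]
    refine Finset.sum_nonneg fun j _ => ?_
    by_cases hij : i < j
    · rw [if_pos hij, psum_add, psum_smul, psum_smul, psum_sub, psum_add,
        psum_single, psum_single]
      have hij' : (i : ℕ) < (j : ℕ) := hij
      have hi2 : (i : ℕ) < m + 2 := i.isLt
      have hj2 : (j : ℕ) < m + 2 := j.isLt
      have hine : ((⟨m + 1, by omega⟩ : Fin (m + 2)) : ℕ) = m + 1 := rfl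
      have hxi : ¬ ((⟨m + 1, by omega⟩ : Fin (m + 2)) = i) := by
        intro he
        have : (i : ℕ) = m + 1 := by rw [← he]
        omega
      simp only [if_pos hij, Pi.add_apply, Pi.smul_apply, Pi.sub_apply,
        Pi.single_apply, smul_eq_mul, if_neg hxi, if_pos hi2, if_pos hj2]
      have h1 := ha i j
      have h2 := hb i j
      by_cases hxj : ((⟨m + 1, by omega⟩ : Fin (m + 2)) = j) <;>
        simp only [hxj, if_pos, if_neg, if_true, if_false] <;> nlinarith
    · rw [if_neg hij]
      simp [psum]
  linarith

noncomputable def Aco (m : ℕ) (v : Fin (m + 2) → ℝ) : ℕ → ℝ := fun t =>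
  if t = m then (psum v (m + 2) - 2 * v ⟨m + 1, by omega⟩) / 2 else psum v (t + 1)

noncomputable def Bco (m : ℕ) (v : Fin (m + 2) → ℝ) : ℕ → ℝ := fun t =>
  if t = m then psum v (m + 2) / 2 else 0

lemma inConeD_of_psum (m : ℕ) (v : Fin (m + 2) → ℝ)
    (h1 : ∀ k, k ≤ m + 2 → 0 ≤ psum v k)
    (h2 : 2 * v ⟨m + 1, by omega⟩ ≤ psum v (m + 2)) :
    inConeD (m + 2) v := by
  refine ⟨fun i j => if (j : ℕ) = (i : ℕ) + 1 then Aco m v (i : ℕ) else 0,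
    fun i j => if (j : ℕ) = (i : ℕ) + 1 then Bco m v (i : ℕ) else 0, ?_, ?_, ?_⟩
  · intro i j
    dsimp only
    split_ifs with hj
    · unfold Aco
      split_ifs with him
      · linarith
      · exact h1 _ (by have := i.isLt; omega)
    · exact le_rfl
  · intro i j
    dsimp only
    split_ifs with hj
    · unfold Bco
      split_ifs with him
      · have := h1 (m + 2) le_rfl; linarith
      · exact le_rfl
    · exact le_rfl
  · funext x
    simp only [Finset.sum_apply]
    have hterm : ∀ i j : Fin (m + 2),
        (if i < j then
          (if (j : ℕ) = (i : ℕ) + 1 then Aco m v (i : ℕ) else 0) •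
              (Pi.single i (1 : ℝ) - Pi.single j 1) +
            (if (j : ℕ) = (i : ℕ) + 1 then Bco m v (i : ℕ) else 0) •
              (Pi.single i (1 : ℝ) + Pi.single j 1)
          else 0 : Fin (m + 2) → ℝ) x
        = (if (j : ℕ) = (i : ℕ) + 1 then
            Aco m v (i : ℕ) * ((if (x : ℕ) = (i : ℕ) then 1 else 0)
              - (if (x : ℕ) = (i : ℕ) + 1 then 1 else 0))
            + Bco m v (i : ℕ) * ((if (x : ℕ) = (i : ℕ) then 1 else 0)
              + (if (x : ℕ) = (i : ℕ) + 1 then 1 else 0))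
          else 0) := by
      intro i j
      by_cases hj : (j : ℕ) = (i : ℕ) + 1
      · have hij : i < j := by rw [Fin.lt_def]; omega
        rw [if_pos hij, if_pos hj, if_pos hj, if_pos hj]
        simp only [Pi.add_apply, Pi.smul_apply, Pi.sub_apply, Pi.single_apply,
          smul_eq_mul, Fin.ext_iff, hj]
      · simp [hj]
    rw [Finset.sum_congr rfl (fun i _ => Finset.sum_congr rfl (fun j _ => hterm i j))]
    have hinner : ∀ i : Fin (m + 2),
        (∑ j : Fin (m + 2), (if (j : ℕ) = (i : ℕ) + 1 then
            Aco m v (i : ℕ) * ((if (x : ℕ) = (i : ℕ) then 1 else 0)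
              - (if (x : ℕ) = (i : ℕ) + 1 then 1 else 0))
            + Bco m v (i : ℕ) * ((if (x : ℕ) = (i : ℕ) then 1 else 0)
              + (if (x : ℕ) = (i : ℕ) + 1 then 1 else 0))
          else 0))
        = (if (i : ℕ) + 1 < m + 2 then
            Aco m v (i : ℕ) * ((if (x : ℕ) = (i : ℕ) then 1 else 0)
              - (if (x : ℕ) = (i : ℕ) + 1 then 1 else 0))
            + Bco m v (i : ℕ) * ((if (x : ℕ) = (i : ℕ) then 1 else 0)
              + (if (x : ℕ) = (i : ℕ) + 1 then 1 else 0))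
          else 0) := fun i => sum_ite_coe _
    rw [Finset.sum_congr rfl (fun i _ => hinner i)]
    have hsplit : ∀ i : Fin (m + 2),
        (if (i : ℕ) + 1 < m + 2 then
            Aco m v (i : ℕ) * ((if (x : ℕ) = (i : ℕ) then 1 else 0)
              - (if (x : ℕ) = (i : ℕ) + 1 then 1 else 0))
            + Bco m v (i : ℕ) * ((if (x : ℕ) = (i : ℕ) then 1 else 0)
              + (if (x : ℕ) = (i : ℕ) + 1 then 1 else 0))
          else 0)
        = (if (i : ℕ) = (x : ℕ) then
            (if (x : ℕ) ≤ m then Aco m v (i : ℕ) + Bco m v (i : ℕ) else 0) else 0)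
          + (if (i : ℕ) = (x : ℕ) - 1 then
            (if 1 ≤ (x : ℕ) then Bco m v (i : ℕ) - Aco m v (i : ℕ) else 0) else 0) := by
      intro i
      have hx := x.isLt
      have hi := i.isLt
      split_ifs <;> first | ring1 | (exfalso; omega)
    rw [Finset.sum_congr rfl (fun i _ => hsplit i), Finset.sum_add_distrib,
      sum_ite_coe' (show (x : ℕ) < m + 2 from x.isLt),
      sum_ite_coe' (show (x : ℕ) - 1 < m + 2 by have := x.isLt; omega)]
    simp only [Fin.val_mk]
    -- final case analysis
    have hx := x.isLt
    have hs1 : psum v (m + 2) = psum v (m + 1) + v ⟨m + 1, by omega⟩ :=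
      psum_succ v (m + 1) (by omega)
    by_cases hxm1 : (x : ℕ) = m + 1
    · have hvx : v x = v ⟨m + 1, by omega⟩ := by congr 1; ext; simpa using hxm1
      have ha' : ¬ ((x : ℕ) ≤ m) := by omega
      have hb' : (1 : ℕ) ≤ (x : ℕ) := by omega
      have hc' : (x : ℕ) - 1 = m := by omega
      rw [if_neg ha', if_pos hb', hc']
      simp only [Aco, Bco, eq_self_iff_true, if_true]
      rw [hvx]
      ring
    · have hxm : (x : ℕ) ≤ m := by omega
      rw [if_pos hxm]
      by_cases hxe : (x : ℕ) = m
      · have hAx : Aco m v (x : ℕ) = (psum v (m + 2) - 2 * v ⟨m + 1, by omega⟩) / 2 := by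
          simp [Aco, hxe]
        have hBx : Bco m v (x : ℕ) = psum v (m + 2) / 2 := by simp [Bco, hxe]
        rw [hAx, hBx]
        by_cases hm0 : m = 0
        · have hb' : ¬ ((1 : ℕ) ≤ (x : ℕ)) := by omega
          rw [if_neg hb']
          have hvx : v x = v ⟨0, by omega⟩ := by congr 1; ext; show (x : ℕ) = 0; omega
          have hs2 : psum v (0 + 1) = psum v 0 + v ⟨0, by omega⟩ := psum_succ v 0 (by omega)
          have hs0 : psum v 0 = 0 := psum_zero v
          have hm1 : psum v (m + 1) = psum v (0 + 1) := congrArg (psum v) (by omega)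
          rw [hvx]
          have hvL : v ⟨m + 1, by omega⟩ = v ⟨m + 1, by omega⟩ := rfl
          linarith [hs1, hs2, hs0, hm1]
        · have hb' : (1 : ℕ) ≤ (x : ℕ) := by omega
          rw [if_pos hb']
          have hAy : Aco m v ((x : ℕ) - 1) = psum v ((x : ℕ) - 1 + 1) := by
            have : ¬ ((x : ℕ) - 1 = m) := by omega
            simp [Aco, this]
          have hBy : Bco m v ((x : ℕ) - 1) = 0 := by
            have : ¬ ((x : ℕ) - 1 = m) := by omega
            simp [Bco, this]
          rw [hAy, hBy]
          have he1 : (x : ℕ) - 1 + 1 = m := by omega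
          rw [he1]
          have hs2 : psum v (m + 1) = psum v m + v ⟨m, by omega⟩ := psum_succ v m (by omega)
          have hvx : v x = v ⟨m, by omega⟩ := by congr 1; ext; simpa using hxe
          rw [hvx]
          linarith [hs1, hs2]
      · have hAx : Aco m v (x : ℕ) = psum v ((x : ℕ) + 1) := by simp [Aco, hxe]
        have hBx : Bco m v (x : ℕ) = 0 := by simp [Bco, hxe]
        rw [hAx, hBx]
        have hs2 : psum v ((x : ℕ) + 1) = psum v (x : ℕ) + v ⟨(x : ℕ), by omega⟩ :=
          psum_succ v (x : ℕ) (by omega)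
        have hvx : v x = v ⟨(x : ℕ), by omega⟩ := by congr 1
        by_cases hx0 : (x : ℕ) = 0
        · have hb' : ¬ ((1 : ℕ) ≤ (x : ℕ)) := by omega
          rw [if_neg hb']
          have hs0 : psum v (x : ℕ) = 0 := by rw [hx0]; exact psum_zero v
          rw [hvx]
          linarith [hs2, hs0]
        · have hb' : (1 : ℕ) ≤ (x : ℕ) := by omega
          rw [if_pos hb']
          have hAy : Aco m v ((x : ℕ) - 1) = psum v ((x : ℕ) - 1 + 1) := by
            have : ¬ ((x : ℕ) - 1 = m) := by omega
            simp [Aco, this]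
          have hBy : Bco m v ((x : ℕ) - 1) = 0 := by
            have : ¬ ((x : ℕ) - 1 = m) := by omega
            simp [Bco, this]
          rw [hAy, hBy]
          have he1 : (x : ℕ) - 1 + 1 = (x : ℕ) := by omega
          rw [he1]
          rw [hvx]
          linarith [hs2]

theorem stmt0 (n : ℕ) (hn : 2 ≤ n) (Ξ Ξ' : Fin n → ℝ)
    (hΞ : Antitone (plusMap n Ξ)) (hΞ' : Antitone (plusMap n Ξ'))
    (h : inConeD n (Ξ' - Ξ)) :
    inConeD n (plusMap n Ξ' - plusMap n Ξ) ∧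
      (plusMap n Ξ = plusMap n Ξ' → Ξ = Ξ') := by
  obtain ⟨m, rfl⟩ : ∃ m, n = m + 2 := ⟨n - 2, by omega⟩
  clear hn hΞ hΞ'
  set v : Fin (m + 2) → ℝ := Ξ' - Ξ with hv
  set w : Fin (m + 2) → ℝ := plusMap (m + 2) Ξ' - plusMap (m + 2) Ξ with hw
  have hL : ((⟨m + 1, by omega⟩ : Fin (m + 2)) : ℕ) = m + 1 := rfl
  -- forward facts for v
  have hpk : ∀ k, 0 ≤ psum v k := psum_nonneg_of_inConeD v h
  have hlast : 2 * v ⟨m + 1, by omega⟩ ≤ psum v (m + 2) := two_last_le_of_inConeD m v h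
  have hvs : psum v (m + 2) = psum v (m + 1) + v ⟨m + 1, by omega⟩ := psum_succ v (m + 1) (by omega)
  have hws : psum w (m + 2) = psum w (m + 1) + w ⟨m + 1, by omega⟩ := psum_succ w (m + 1) (by omega)
  -- |v last| ≤ psum v (m+1)
  have habs_v : |v ⟨m + 1, by omega⟩| ≤ psum v (m + 1) := by
    rw [abs_le]
    constructor <;> [linarith [hpk (m + 2)]; linarith]
  -- w agrees with v below the last coordinate
  have hagree : ∀ i : Fin (m + 2), (i : ℕ) ≠ m + 1 → w i = v i := by
    intro i hi
    simp only [hw, hv, Pi.sub_apply, plusMap]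
    have : ¬ ((i : ℕ) = m + 2 - 1) := by omega
    rw [if_neg this, if_neg this]
  have hwk : ∀ k, k ≤ m + 1 → psum w k = psum v k := by
    intro k hk
    unfold psum
    refine Finset.sum_congr rfl fun i _ => ?_
    by_cases hik : (i : ℕ) < k
    · rw [if_pos hik, if_pos hik, hagree i (by omega)]
    · rw [if_neg hik, if_neg hik]
  -- the last coordinates
  have hwL : w ⟨m + 1, by omega⟩ = |Ξ' ⟨m + 1, by omega⟩| - |Ξ ⟨m + 1, by omega⟩| := by
    simp only [hw, Pi.sub_apply, plusMap]
    have : ((⟨m + 1, by omega⟩ : Fin (m + 2)) : ℕ) = m + 2 - 1 := by omega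
    rw [if_pos this, if_pos this]
  have hvL : v ⟨m + 1, by omega⟩ = Ξ' ⟨m + 1, by omega⟩ - Ξ ⟨m + 1, by omega⟩ := rfl
  have habs_w : |w ⟨m + 1, by omega⟩| ≤ |v ⟨m + 1, by omega⟩| := by
    rw [hwL, hvL]
    exact abs_abs_sub_abs_le_abs_sub _ _
  have habs_w' := abs_le.mp (le_trans habs_w habs_v)
  constructor
  · apply inConeD_of_psum
    · intro k hk
      rcases Nat.lt_or_ge k (m + 2) with hk2 | hk2
      · rw [hwk k (by omega)]; exact hpk k
      · have hk3 : k = m + 2 := by omega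
        subst hk3
        rw [hws, hwk (m + 1) le_rfl]
        have := neg_abs_le (w ⟨m + 1, by omega⟩)
        linarith [habs_w'.1]
    · rw [hws, hwk (m + 1) le_rfl]
      have := le_abs_self (w ⟨m + 1, by omega⟩)
      linarith [habs_w'.2]
  · intro heq
    have hvanish : ∀ i : Fin (m + 2), (i : ℕ) ≠ m + 1 → v i = 0 := by
      intro i hi
      have h1 := congrFun heq i
      simp only [plusMap] at h1
      have : ¬ ((i : ℕ) = m + 2 - 1) := by omega
      rw [if_neg this, if_neg this] at h1
      simp [hv, h1]
    have hps : psum v (m + 1) = 0 := by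
      unfold psum
      apply Finset.sum_eq_zero
      intro i _
      by_cases hik : (i : ℕ) < m + 1
      · rw [if_pos hik, hvanish i (by omega)]
      · rw [if_neg hik]
    have hvlast : v ⟨m + 1, by omega⟩ = 0 := by
      have := habs_v
      rw [hps] at this
      have h0 := abs_nonneg (v ⟨m + 1, by omega⟩)
      have : |v ⟨m + 1, by omega⟩| = 0 := le_antisymm this h0
      exact abs_eq_zero.mp this
    funext i
    by_cases hi : (i : ℕ) = m + 1
    · have hieq : i = (⟨m + 1, by omega⟩ : Fin (m + 2)) := by ext; simpa using hi
      have := hvlast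
      rw [hv] at this
      simp only [Pi.sub_apply] at this
      rw [hieq]
      linarith
    · have := hvanish i hi
      rw [hv] at this
      simp only [Pi.sub_apply] at this
      linarith
end

section
/- Let n ≥ 2. A vector v ∈ ℝ^n is a nonnegative linear combination of the vectors e_i − e_j and e_i + e_j for 1 ≤ i < j ≤ n if and only if Σ_{i=1}^k v_i ≥ 0 for every 1 ≤ k ≤ n−2 and Σ_{i=1}^{n−1} v_i ≥ |v_n|. -/
lemma sum_single_weight {n : ℕ} (w : Fin n → ℝ) (i : Fin n) :
    ∑ x : Fin n, w x * (Pi.single i (1:ℝ) : Fin n → ℝ) x = w i := by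
  simp [Pi.single_apply, mul_ite]

lemma cone_nonneg {n : ℕ} {v : Fin n → ℝ} (h : inConeD n v) (w : Fin n → ℝ)
    (hw : ∀ i j : Fin n, i < j → 0 ≤ w i - w j ∧ 0 ≤ w i + w j) :
    0 ≤ ∑ x : Fin n, w x * v x := by
  obtain ⟨a, b, ha, hb, hv⟩ := h
  let φ : (Fin n → ℝ) →ₗ[ℝ] ℝ :=
    { toFun := fun u => ∑ x : Fin n, w x * u x
      map_add' := by intro u₁ u₂; simp [mul_add, Finset.sum_add_distrib]
      map_smul' := by
        intro c u; simp [Finset.mul_sum, smul_eq_mul, mul_comm, mul_left_comm] }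
  have key : ∑ x : Fin n, w x * v x = φ v := rfl
  rw [key, hv, map_sum]
  apply Finset.sum_nonneg
  intro i _
  rw [map_sum]
  apply Finset.sum_nonneg
  intro j _
  by_cases hij : i < j
  · rw [if_pos hij]
    have h1 : φ (Pi.single i (1:ℝ)) = w i := sum_single_weight w i
    have h2 : φ (Pi.single j (1:ℝ)) = w j := sum_single_weight w j
    have heq : φ (a i j • (Pi.single i (1 : ℝ) - Pi.single j 1) +
        b i j • (Pi.single i (1 : ℝ) + Pi.single j 1))
        = a i j * (w i - w j) + b i j * (w i + w j) := by
      rw [map_add, map_smul, map_smul, map_sub, map_add, h1, h2]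
      simp [smul_eq_mul]
    rw [heq]
    obtain ⟨hw1, hw2⟩ := hw i j hij
    nlinarith [mul_nonneg (ha i j) hw1, mul_nonneg (hb i j) hw2]
  · rw [if_neg hij, map_zero]

lemma sum_indicator {n : ℕ} (v : Fin n → ℝ) (k : ℕ) :
    ∑ x : Fin n, (if (x : ℕ) < k then (1:ℝ) else 0) * v x = psum v k := by
  simp [psum, ite_mul]

lemma sum_eps {n : ℕ} (hn : 1 ≤ n) (v : Fin n → ℝ) (ε : ℝ) :
    ∑ x : Fin n, (if (x : ℕ) < n - 1 then (1:ℝ) else ε) * v x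
      = psum v (n - 1) + ε * v ⟨n - 1, by omega⟩ := by
  have key : ∀ x : Fin n, (if (x : ℕ) < n - 1 then (1:ℝ) else ε) * v x
      = (if (x : ℕ) < n - 1 then v x else 0)
        + (if x = (⟨n - 1, by omega⟩ : Fin n) then ε * v x else 0) := by
    intro x
    rcases lt_or_ge (x : ℕ) (n - 1) with h | h
    · have hx : x ≠ (⟨n - 1, by omega⟩ : Fin n) := by
        intro hh; rw [hh] at h; simp at h
      rw [if_pos h, if_pos h, if_neg hx]; ring
    · have hx : x = (⟨n - 1, by omega⟩ : Fin n) := by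
        apply Fin.ext; show (x : ℕ) = n - 1; have := x.isLt; omega
      rw [if_neg (not_lt.mpr h), if_neg (not_lt.mpr h), if_pos hx]; ring
  rw [Finset.sum_congr rfl fun x _ => key x, Finset.sum_add_distrib,
    Finset.sum_ite_eq' Finset.univ]
  simp [psum]

lemma eval_sum {n : ℕ} (a b : Fin n → Fin n → ℝ) (v : Fin n → ℝ)
    (hv : v = ∑ i : Fin n, ∑ j : Fin n,
      (if i < j then
        a i j • (Pi.single i (1 : ℝ) - Pi.single j 1) +
          b i j • (Pi.single i (1 : ℝ) + Pi.single j 1)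
      else 0)) (x : Fin n) :
    v x
    = (∑ j : Fin n, if x < j then a x j + b x j else 0)
      + (∑ i : Fin n, if i < x then b i x - a i x else 0) := by
  rw [hv, Finset.sum_apply]
  have step : ∀ i : Fin n,
      ((∑ j : Fin n,
        (if i < j then
          a i j • (Pi.single i (1 : ℝ) - Pi.single j 1) +
            b i j • (Pi.single i (1 : ℝ) + Pi.single j 1)
        else 0) : Fin n → ℝ)) x
      = ∑ j : Fin n,
          ((if x = i then (if i < j then a i j + b i j else 0) else 0)
            + (if x = j then (if i < j then b i j - a i j else 0) else 0)) := by
    intro i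
    rw [Finset.sum_apply]
    apply Finset.sum_congr rfl
    intro j _
    by_cases hij : i < j
    · simp only [if_pos hij, Pi.add_apply, Pi.smul_apply, Pi.sub_apply,
        Pi.single_apply, smul_eq_mul]
      have hne : i ≠ j := ne_of_lt hij
      by_cases hxi : x = i <;> by_cases hxj : x = j <;>
        simp [hxi, hxj, hne, hne.symm] <;>
        first
          | ring
          | (exact absurd (hxi.symm.trans hxj) hne)
    · simp [hij]
  rw [Finset.sum_congr rfl fun i _ => step i]
  have split : ∀ i : Fin n, ∑ j : Fin n,
      ((if x = i then (if i < j then a i j + b i j else 0) else 0)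
        + (if x = j then (if i < j then b i j - a i j else 0) else 0))
      = (if x = i then ∑ j : Fin n, (if i < j then a i j + b i j else 0) else 0)
        + ∑ j : Fin n, (if x = j then (if i < j then b i j - a i j else 0) else 0) := by
    intro i
    rw [Finset.sum_add_distrib]
    congr 1
    split_ifs <;> simp
  rw [Finset.sum_congr rfl fun i _ => split i, Finset.sum_add_distrib]
  congr 1
  · rw [Finset.sum_ite_eq Finset.univ x]
    simp
  · apply Finset.sum_congr rfl
    intro i _
    rw [Finset.sum_ite_eq Finset.univ x (fun j => if i < j then b i j - a i j else 0)]
    simp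

lemma eq_sum_of {n : ℕ} (a b : Fin n → Fin n → ℝ) (v : Fin n → ℝ)
    (h : ∀ x : Fin n, v x
      = (∑ j : Fin n, if x < j then a x j + b x j else 0)
        + (∑ i : Fin n, if i < x then b i x - a i x else 0)) :
    v = ∑ i : Fin n, ∑ j : Fin n,
      (if i < j then
        a i j • (Pi.single i (1 : ℝ) - Pi.single j 1) +
          b i j • (Pi.single i (1 : ℝ) + Pi.single j 1)
      else 0) := by
  funext x
  rw [h x]
  exact (eval_sum a b _ rfl x).symm

/-- The last coordinate. -/
noncomputable def lastv {n : ℕ} (hn : 2 ≤ n) (v : Fin n → ℝ) : ℝ := v ⟨n - 1, Nat.sub_lt (by omega) Nat.one_pos⟩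

/-- Coefficient of the simple root `e i - e (i+1)`. -/
noncomputable def ccD {n : ℕ} (hn : 2 ≤ n) (v : Fin n → ℝ) (i : Fin n) : ℝ :=
  if (i : ℕ) + 2 < n then psum v ((i : ℕ) + 1)
  else (psum v (n - 1) - lastv hn v) / 2

noncomputable def aD {n : ℕ} (hn : 2 ≤ n) (v : Fin n → ℝ) (i j : Fin n) : ℝ :=
  if (j : ℕ) = (i : ℕ) + 1 then ccD hn v i else 0

noncomputable def bD {n : ℕ} (hn : 2 ≤ n) (v : Fin n → ℝ) (i j : Fin n) : ℝ :=
  if (i : ℕ) = n - 2 ∧ (j : ℕ) = n - 1 then (psum v (n - 1) + lastv hn v) / 2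
  else 0

lemma sum1_eq {n : ℕ} (hn : 2 ≤ n) (v : Fin n → ℝ) (x : Fin n) :
    (∑ j : Fin n, if x < j then aD hn v x j + bD hn v x j else 0)
    = if (x : ℕ) + 1 < n then
        ccD hn v x + (if (x : ℕ) = n - 2 then (psum v (n - 1) + lastv hn v) / 2 else 0)
      else 0 := by
  by_cases hx : (x : ℕ) + 1 < n
  · rw [if_pos hx]
    rw [Finset.sum_eq_single_of_mem (⟨(x : ℕ) + 1, hx⟩ : Fin n) (Finset.mem_univ _)
      (by
        intro j _ hj
        by_cases hxj : x < j
        · rw [if_pos hxj]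
          have hj1 : (j : ℕ) ≠ (x : ℕ) + 1 := by
            intro hh; exact hj (Fin.ext hh)
          rw [aD, if_neg hj1, bD, if_neg (by
            rintro ⟨h1, h2⟩
            exact hj1 (by omega))]
          ring
        · rw [if_neg hxj])]
    rw [if_pos (by show (x : ℕ) < (x : ℕ) + 1; omega)]
    rw [aD, if_pos rfl, bD]
    by_cases hx2 : (x : ℕ) = n - 2
    · rw [if_pos ⟨hx2, by show (x : ℕ) + 1 = n - 1; omega⟩, if_pos hx2]
    · rw [if_neg (by rintro ⟨h1, _⟩; exact hx2 h1), if_neg hx2]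
  · rw [if_neg hx]
    apply Finset.sum_eq_zero
    intro j _
    rw [if_neg]
    intro hlt
    have := j.isLt
    have : (x : ℕ) < (j : ℕ) := hlt
    omega

lemma sum2_eq {n : ℕ} (hn : 2 ≤ n) (v : Fin n → ℝ) (x : Fin n) :
    (∑ i : Fin n, if i < x then bD hn v i x - aD hn v i x else 0)
    = if 1 ≤ (x : ℕ) then
        (if (x : ℕ) = n - 1 then (psum v (n - 1) + lastv hn v) / 2 else 0)
          - ccD hn v ⟨(x : ℕ) - 1, lt_of_le_of_lt (Nat.sub_le _ _) x.isLt⟩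
      else 0 := by
  by_cases hx : 1 ≤ (x : ℕ)
  · rw [if_pos hx]
    rw [Finset.sum_eq_single_of_mem
      (⟨(x : ℕ) - 1, lt_of_le_of_lt (Nat.sub_le _ _) x.isLt⟩ : Fin n)
      (Finset.mem_univ _)
      (by
        intro i _ hi
        by_cases hix : i < x
        · rw [if_pos hix]
          have hi1 : (i : ℕ) ≠ (x : ℕ) - 1 := by
            intro hh; exact hi (Fin.ext hh)
          have hix' : (i : ℕ) < (x : ℕ) := hix
          rw [aD, if_neg (by intro hh; omega), bD, if_neg (by
            rintro ⟨h1, h2⟩; omega)]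
          ring
        · rw [if_neg hix])]
    rw [if_pos (by show (x : ℕ) - 1 < (x : ℕ); omega)]
    rw [aD, if_pos (by show (x : ℕ) = (x : ℕ) - 1 + 1; omega), bD]
    by_cases hx2 : (x : ℕ) = n - 1
    · rw [if_pos ⟨by show (x : ℕ) - 1 = n - 2; omega, hx2⟩, if_pos hx2]
    · rw [if_neg (by rintro ⟨h1, h2⟩; exact hx2 h2), if_neg hx2]
  · rw [if_neg hx]
    apply Finset.sum_eq_zero
    intro i _
    rw [if_neg]
    intro hlt
    have : (i : ℕ) < (x : ℕ) := hlt
    omega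

lemma comp_eq {n : ℕ} (hn : 2 ≤ n) (v : Fin n → ℝ) (x : Fin n) :
    v x
    = (if (x : ℕ) + 1 < n then
        ccD hn v x + (if (x : ℕ) = n - 2 then (psum v (n - 1) + lastv hn v) / 2 else 0)
      else 0)
      + (if 1 ≤ (x : ℕ) then
        (if (x : ℕ) = n - 1 then (psum v (n - 1) + lastv hn v) / 2 else 0)
          - ccD hn v ⟨(x : ℕ) - 1, lt_of_le_of_lt (Nat.sub_le _ _) x.isLt⟩
      else 0) := by
  have hm := x.isLt
  have hcc1 : (x : ℕ) + 2 < n → ccD hn v x = psum v ((x : ℕ) + 1) := fun h => by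
    rw [ccD, if_pos h]
  have hcc2 : ¬ (x : ℕ) + 2 < n → ccD hn v x = (psum v (n - 1) - lastv hn v) / 2 :=
    fun h => by rw [ccD, if_neg h]
  have hccp1 : ∀ h' : (x : ℕ) - 1 < n, 1 ≤ (x : ℕ) → (x : ℕ) + 1 < n →
      ccD hn v ⟨(x : ℕ) - 1, h'⟩ = psum v (x : ℕ) := by
    intro h' h1 h2
    rw [ccD]
    have : ((⟨(x : ℕ) - 1, h'⟩ : Fin n) : ℕ) = (x : ℕ) - 1 := rfl
    rw [this, if_pos (by omega), show (x : ℕ) - 1 + 1 = (x : ℕ) by omega]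
  have hccp2 : ∀ h' : (x : ℕ) - 1 < n, (x : ℕ) = n - 1 →
      ccD hn v ⟨(x : ℕ) - 1, h'⟩ = (psum v (n - 1) - lastv hn v) / 2 := by
    intro h' hx
    rw [ccD]
    have : ((⟨(x : ℕ) - 1, h'⟩ : Fin n) : ℕ) = (x : ℕ) - 1 := rfl
    rw [this, if_neg (by omega)]
  by_cases hx1 : (x : ℕ) + 1 < n
  · rw [if_pos hx1]
    by_cases hx0 : 1 ≤ (x : ℕ)
    · rw [if_pos hx0, if_neg (show (x : ℕ) ≠ n - 1 by omega),
        hccp1 _ hx0 hx1]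
      by_cases hx2 : (x : ℕ) = n - 2
      · rw [if_pos hx2, hcc2 (by omega)]
        have hps := psum_succ v (n - 2) (by omega)
        rw [show n - 2 + 1 = n - 1 by omega,
          show (⟨n - 2, by omega⟩ : Fin n) = x from Fin.ext hx2.symm] at hps
        rw [show (x : ℕ) = n - 2 from hx2]
        linarith
      · rw [if_neg hx2, hcc1 (by omega)]
        have hps := psum_succ v (x : ℕ) hm
        rw [show (⟨(x : ℕ), hm⟩ : Fin n) = x from Fin.ext rfl] at hps
        linarith
    · rw [if_neg hx0]
      have hx0' : (x : ℕ) = 0 := by omega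
      have hps := psum_succ v 0 (by omega)
      rw [psum_zero, show (⟨0, by omega⟩ : Fin n) = x from Fin.ext hx0'.symm] at hps
      by_cases hx2 : (x : ℕ) = n - 2
      · have hn2 : n = 2 := by omega
        rw [if_pos hx2, hcc2 (by omega)]
        rw [show n - 1 = 0 + 1 by omega, hps]
        ring
      · rw [if_neg hx2, hcc1 (by omega), hx0', hps]
        ring
  · rw [if_neg hx1, if_pos (show 1 ≤ (x : ℕ) by omega),
      if_pos (show (x : ℕ) = n - 1 by omega),
      hccp2 _ (by omega)]
    have hlast : lastv hn v = v x := by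
      rw [lastv]
      congr 1
      exact Fin.ext (by show n - 1 = (x : ℕ); omega)
    rw [← hlast]
    ring

theorem stmt3 (n : ℕ) (hn : 2 ≤ n) (v : Fin n → ℝ) :
    inConeD n v ↔
      (∀ k, 1 ≤ k → k ≤ n - 2 → 0 ≤ psum v k) ∧
        |v ⟨n - 1, by omega⟩| ≤ psum v (n - 1) := by
  constructor
  · intro h
    constructor
    · intro k hk1 hk2
      have h0 : 0 ≤ ∑ x : Fin n, (if (x : ℕ) < k then (1:ℝ) else 0) * v x := by
        apply cone_nonneg h
        intro i j hij
        have hij' : (i : ℕ) < (j : ℕ) := hij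
        constructor
        · split_ifs <;> (try (exfalso; omega)) <;> norm_num
        · split_ifs <;> norm_num
      rwa [sum_indicator] at h0
    · have hup : 0 ≤ ∑ x : Fin n, (if (x : ℕ) < n - 1 then (1:ℝ) else -1) * v x := by
        apply cone_nonneg h
        intro i j hij
        have hij' : (i : ℕ) < (j : ℕ) := hij
        have hj := j.isLt
        constructor
        · split_ifs <;> (try (exfalso; omega)) <;> norm_num
        · split_ifs <;> (try (exfalso; omega)) <;> norm_num
      have hlow : 0 ≤ ∑ x : Fin n, (if (x : ℕ) < n - 1 then (1:ℝ) else 1) * v x := by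
        apply cone_nonneg h
        intro i j hij
        constructor
        · split_ifs <;> norm_num
        · split_ifs <;> norm_num
      rw [sum_eps (by omega) v (-1)] at hup
      rw [sum_eps (by omega) v 1] at hlow
      rw [abs_le]
      constructor <;> linarith
  · rintro ⟨h1, h2⟩
    have h2' : |lastv hn v| ≤ psum v (n - 1) := h2
    have habs := abs_le.mp h2'
    refine ⟨aD hn v, bD hn v, ?_, ?_, ?_⟩
    · intro i j
      rw [aD]
      split_ifs with hc
      · rw [ccD]
        split_ifs with hc2
        · exact h1 _ (by omega) (by omega)
        · linarith [habs.2]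
      · exact le_rfl
    · intro i j
      rw [bD]
      split_ifs with hc
      · linarith [habs.1]
      · exact le_rfl
    · apply eq_sum_of
      intro x
      rw [sum1_eq hn v x, sum2_eq hn v x]
      exact comp_eq hn v x
end
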